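/- A subspace L of the direct sum A = ⊕_{i=1}^k M_{n_i}(ℂ) is a Lie ideal if and only if there exist δ_i ∈ {0,1} for 1 ≤ i ≤ k such that ⊕_{i=1}^k δ_i · sl_{n_i} ⊆ L ⊆ ⊕_{i=1}^k δ_i · M_{n_i} + ⊕_{i=1}^k ℂ·I_{n_i}. -/

import Mathlib

open Matrix

namespace LieIdealAux

set_option maxHeartbeats 1000000

variable {N : ℕ} (L : Submodule ℂ (Matrix (Fin N) (Fin N) ℂ))

lemma smul_cancel {c : ℂ} (hc : c ≠ 0) {m : Matrix (Fin N) (Fin N) ℂ}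
    (h : c • m ∈ L) : m ∈ L := by
  have := L.smul_mem c⁻¹ h
  rwa [smul_smul, inv_mul_cancel₀ hc, one_smul] at this

lemma scale_mem {p q : Fin N} {c : ℂ} (hc : c ≠ 0)
    (h : Matrix.single p q c ∈ L) : Matrix.single p q (1:ℂ) ∈ L := by
  apply smul_cancel L hc
  rwa [Matrix.smul_single, smul_eq_mul, mul_one]

variable (hL : ∀ x ∈ L, ∀ a, x * a - a * x ∈ L)

include hL

lemma chain_mem {p q r : Fin N} (hqr : q ≠ r) (hpr : p ≠ r)
    (h : Matrix.single p q (1:ℂ) ∈ L) : Matrix.single p r (1:ℂ) ∈ L := by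
  have := hL _ h (Matrix.single q r 1)
  simpa only [Matrix.single_mul_single_same, Matrix.single_mul_single_of_ne _ _ _ _ (Ne.symm hpr), one_mul,
    sub_zero] using this

lemma chainl_mem {p q r : Fin N} (hrp : r ≠ p) (hqr : q ≠ r)
    (h : Matrix.single p q (1:ℂ) ∈ L) : Matrix.single r q (1:ℂ) ∈ L := by
  have := hL _ h (Matrix.single r p 1)
  simp only [Matrix.single_mul_single_of_ne _ _ _ _ hqr, Matrix.single_mul_single_same, one_mul,
    zero_sub] at this
  simpa using L.neg_mem this

lemma diag_mem {p q : Fin N} (hpq : p ≠ q) (h : Matrix.single p q (1:ℂ) ∈ L) :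
    Matrix.single p p (1:ℂ) - Matrix.single q q (1:ℂ) ∈ L := by
  have := hL _ h (Matrix.single q p 1)
  simpa only [Matrix.single_mul_single_same, one_mul] using this

lemma swap_mem {p q : Fin N} (hpq : p ≠ q) (h : Matrix.single p q (1:ℂ) ∈ L) :
    Matrix.single q p (1:ℂ) ∈ L := by
  have hH := diag_mem L hL hpq h
  have h2 := hL _ hH (Matrix.single q p 1)
  have e : (Matrix.single p p (1:ℂ) - Matrix.single q q 1) * Matrix.single q p 1 -
      Matrix.single q p 1 * (Matrix.single p p 1 - Matrix.single q q 1) =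
      (-2 : ℂ) • Matrix.single q p (1:ℂ) := by
    simp only [sub_mul, mul_sub, Matrix.single_mul_single_same,
      Matrix.single_mul_single_of_ne _ _ _ _ hpq, one_mul]
    module
  rw [e] at h2
  exact smul_cancel L (by norm_num) h2

/-- from one off-diagonal matrix unit in `L`, get all of them -/
lemma all_offdiag_mem {i j : Fin N} (hij : i ≠ j) (h : Matrix.single i j (1:ℂ) ∈ L) :
    ∀ p q : Fin N, p ≠ q → Matrix.single p q (1:ℂ) ∈ L := by
  have hrow : ∀ q : Fin N, q ≠ i → Matrix.single i q (1:ℂ) ∈ L := by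
    intro q hq
    rcases eq_or_ne q j with rfl | hqj
    · exact h
    · exact chain_mem L hL (Ne.symm hqj) (Ne.symm hq) h
  intro p q hpq
  rcases eq_or_ne q i with rfl | hqi
  · exact swap_mem L hL (Ne.symm hpq) (hrow p hpq)
  · rcases eq_or_ne p i with rfl | hpi
    · exact hrow q hqi
    · exact chainl_mem L hL hpi (Ne.symm hpq) (hrow q hqi)

omit hL

/-- core lemma -/
lemma core (hL : ∀ x ∈ L, ∀ a, x * a - a * x ∈ L)
    (x : Matrix (Fin N) (Fin N) ℂ)
    (hx : ∀ a, x * a - a * x ∈ L)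
    (hnc : ∃ a, x * a ≠ a * x) :
    ∀ m : Matrix (Fin N) (Fin N) ℂ, m.trace = 0 → m ∈ L := by
  obtain ⟨i, j, hij, hEij⟩ : ∃ i j : Fin N, i ≠ j ∧ Matrix.single i j (1:ℂ) ∈ L := by
    by_cases hod : ∃ p q : Fin N, p ≠ q ∧ x q p ≠ 0
    · obtain ⟨p, q, hpq, hx0⟩ := hod
      refine ⟨p, q, hpq, ?_⟩
      have hd := hL _ (hx (Matrix.single p q 1)) (Matrix.single p q 1)
      have hE2 : (Matrix.single p q (1:ℂ)) * Matrix.single p q 1 = 0 :=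
        Matrix.single_mul_single_of_ne _ _ _ _ (Ne.symm hpq) _
      have hExE : Matrix.single p q (1:ℂ) * x * Matrix.single p q 1 =
          Matrix.single p q (x q p) := by
        ext r s
        rcases eq_or_ne s q with rfl | hs
        · rcases eq_or_ne r p with rfl | hr
          · simp
          · rw [Matrix.mul_single_apply_same,
              Matrix.single_mul_apply_of_ne _ _ _ _ _ hr, zero_mul,
              Matrix.single_apply_of_row_ne (Ne.symm hr)]
        · rw [Matrix.mul_single_apply_of_ne _ _ _ _ _ hs,
            Matrix.single_apply_of_col_ne _ _ (Ne.symm hs)]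
      have key : (x * Matrix.single p q 1 - Matrix.single p q 1 * x) * Matrix.single p q 1 -
          Matrix.single p q 1 * (x * Matrix.single p q 1 - Matrix.single p q 1 * x) =
          (-2 * x q p) • Matrix.single p q (1:ℂ) := by
        have expand : (x * Matrix.single p q 1 - Matrix.single p q 1 * x) * Matrix.single p q 1 -
            Matrix.single p q 1 * (x * Matrix.single p q 1 - Matrix.single p q 1 * x) =
            x * (Matrix.single p q 1 * Matrix.single p q 1) -
            (2:ℂ) • (Matrix.single p q 1 * x * Matrix.single p q 1) +
            Matrix.single p q 1 * Matrix.single p q 1 * x := by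
          simp only [sub_mul, mul_sub, mul_assoc, two_smul]
          abel
        have hsm : Matrix.single p q (x q p) = x q p • Matrix.single p q (1:ℂ) := by
          rw [Matrix.smul_single, smul_eq_mul, mul_one]
        rw [expand, hE2, hExE, hsm, mul_zero, zero_mul]
        module
      rw [key] at hd
      exact smul_cancel L (by simpa using hx0) hd
    · -- x is diagonal; some two diagonal entries differ
      push_neg at hod
      have hnept : Nonempty (Fin N) := by
        by_contra hne
        obtain ⟨a, ha⟩ := hnc
        exact ha (by ext r s; exact absurd (Nonempty.intro r) hne)
      obtain ⟨i0⟩ := hnept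
      obtain ⟨p, q, hpq, hdne⟩ : ∃ p q : Fin N, p ≠ q ∧ x p p ≠ x q q := by
        by_contra hall
        push_neg at hall
        have hxs : x = Matrix.diagonal (fun _ => x i0 i0) := by
          ext r s
          rcases eq_or_ne r s with rfl | hrs
          · rw [Matrix.diagonal_apply_eq]
            rcases eq_or_ne r i0 with rfl | hri
            · rfl
            · exact hall r i0 hri
          · rw [Matrix.diagonal_apply_ne _ hrs, hod s r (Ne.symm hrs)]
        obtain ⟨a, ha⟩ := hnc
        apply ha
        rw [hxs]
        ext r s
        simp [Matrix.diagonal_mul, Matrix.mul_diagonal, mul_comm]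
      refine ⟨p, q, hpq, ?_⟩
      have hc := hx (Matrix.single p q 1)
      have key : x * Matrix.single p q 1 - Matrix.single p q 1 * x =
          (x p p - x q q) • Matrix.single p q (1:ℂ) := by
        ext r s
        rcases eq_or_ne s q with rfl | hs
        · rcases eq_or_ne r p with rfl | hr
          · simp [mul_comm]
          · rw [Matrix.sub_apply, Matrix.mul_single_apply_same,
              Matrix.single_mul_apply_of_ne _ _ _ _ _ hr,
              hod p r (Ne.symm hr), zero_mul, sub_zero, Matrix.smul_apply,
              Matrix.single_apply_of_row_ne (Ne.symm hr), smul_zero]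
        · rcases eq_or_ne r p with rfl | hr
          · rw [Matrix.sub_apply, Matrix.mul_single_apply_of_ne _ _ _ _ _ hs,
              Matrix.single_mul_apply_same, hod s q hs, mul_zero, zero_sub,
              Matrix.smul_apply, Matrix.single_apply_of_col_ne _ _ (Ne.symm hs),
              smul_zero, neg_zero]
          · rw [Matrix.sub_apply, Matrix.mul_single_apply_of_ne _ _ _ _ _ hs,
              Matrix.single_mul_apply_of_ne _ _ _ _ _ hr, sub_zero,
              Matrix.smul_apply, Matrix.single_apply_of_row_ne (Ne.symm hr), smul_zero]
      rw [key] at hc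
      exact smul_cancel L (sub_ne_zero_of_ne hdne) hc
  -- now use all_offdiag_mem and the diagonal trick
  intro m hm
  have hoff := all_offdiag_mem L hL hij hEij
  have hdiagmem : ∀ p : Fin N, Matrix.single p p (1:ℂ) - Matrix.single i i (1:ℂ) ∈ L := by
    intro p
    rcases eq_or_ne p i with rfl | hpi
    · simpa using L.zero_mem
    · exact diag_mem L hL hpi (hoff p i hpi)
  have hrepr : m = ∑ p : Fin N, ∑ q : Fin N,
      (m p q • Matrix.single p q (1:ℂ) -
        if p = q then m p q • Matrix.single i i (1:ℂ) else 0) := by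
    have h1 : ∑ p : Fin N, ∑ q : Fin N, m p q • Matrix.single p q (1:ℂ) = m := by
      conv_rhs => rw [Matrix.matrix_eq_sum_single m]
      refine Finset.sum_congr rfl fun p _ => Finset.sum_congr rfl fun q _ => ?_
      rw [Matrix.smul_single, smul_eq_mul, mul_one]
    have h2 : ∑ p : Fin N, ∑ q : Fin N,
        (if p = q then m p q • Matrix.single i i (1:ℂ) else 0) = 0 := by
      have : ∀ p : Fin N, ∑ q : Fin N,
          (if p = q then m p q • Matrix.single i i (1:ℂ) else 0) =
          m p p • Matrix.single i i (1:ℂ) := fun p =>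
        (Finset.sum_ite_eq _ p _).trans (if_pos (Finset.mem_univ p))
      rw [Finset.sum_congr rfl fun p _ => this p, ← Finset.sum_smul]
      have : ∑ p : Fin N, m p p = m.trace := rfl
      rw [this, hm, zero_smul]
    simp only [Finset.sum_sub_distrib]
    rw [h1, h2, sub_zero]
  rw [hrepr]
  refine L.sum_mem fun p _ => L.sum_mem fun q _ => ?_
  rcases eq_or_ne p q with rfl | hpq
  · rw [if_pos rfl, ← smul_sub]
    exact L.smul_mem _ (hdiagmem p)
  · rw [if_neg hpq, sub_zero]
    exact L.smul_mem _ (hoff p q hpq)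

end LieIdealAux

/-- A subspace `L` of `⊕ᵢ M_{nᵢ}(ℂ)` is a Lie ideal iff there are
`δᵢ ∈ {0,1}` with `⊕ δᵢ sl_{nᵢ} ⊆ L ⊆ ⊕ δᵢ M_{nᵢ} + ⊕ ℂ I_{nᵢ}`. -/
theorem lie_ideals_of_direct_sum_of_matrix_algebras (k : ℕ) (n : Fin k → ℕ)
    (L : Submodule ℂ (∀ i : Fin k, Matrix (Fin (n i)) (Fin (n i)) ℂ)) :
    (∀ x ∈ L, ∀ a : (∀ i : Fin k, Matrix (Fin (n i)) (Fin (n i)) ℂ),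
        x * a - a * x ∈ L) ↔
      ∃ δ : Fin k → Bool,
        Submodule.pi Set.univ
            (fun i => if δ i then
                LinearMap.ker (Matrix.traceLinearMap (Fin (n i)) ℂ ℂ)
              else (⊥ : Submodule ℂ (Matrix (Fin (n i)) (Fin (n i)) ℂ))) ≤ L ∧
        L ≤ Submodule.pi Set.univ
              (fun i => if δ i then (⊤ : Submodule ℂ (Matrix (Fin (n i)) (Fin (n i)) ℂ))
                else ⊥) ⊔
            Submodule.pi Set.univ
              (fun i => Submodule.span ℂ {(1 : Matrix (Fin (n i)) (Fin (n i)) ℂ)}) := by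
  classical
  constructor
  · intro hLie
    set P : Fin k → Prop := fun i => ∃ x ∈ L, ∃ a, x i * a ≠ a * x i with hP
    refine ⟨fun i => decide (P i), ?_, ?_⟩
    · -- lower bound
      intro v hv
      have hv' : ∀ i, v i ∈ (if decide (P i) then
          LinearMap.ker (Matrix.traceLinearMap (Fin (n i)) ℂ ℂ)
        else (⊥ : Submodule ℂ (Matrix (Fin (n i)) (Fin (n i)) ℂ))) :=
        fun i => Submodule.mem_pi.mp hv i (Set.mem_univ i)
      have hsingle : ∀ i, Pi.single i (v i) ∈ L := by
        intro i
        by_cases hPi : P i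
        · have hvi := hv' i
          rw [if_pos (by simpa using hPi)] at hvi
          have htr : (v i).trace = 0 := hvi
          -- the comap submodule
          set K : Submodule ℂ (Matrix (Fin (n i)) (Fin (n i)) ℂ) :=
            L.comap (LinearMap.single ℂ (fun i => Matrix (Fin (n i)) (Fin (n i)) ℂ) i) with hK
          have hmemK : ∀ m, m ∈ K ↔ Pi.single i m ∈ L := fun m => Iff.rfl
          have hKL : ∀ m ∈ K, ∀ a, m * a - a * m ∈ K := by
            intro m hm a
            rw [hmemK]
            have := hLie _ ((hmemK m).mp hm) (Pi.single i a)
            have heq : (Pi.single i m : ∀ j : Fin k, Matrix (Fin (n j)) (Fin (n j)) ℂ) *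
                  Pi.single i a - Pi.single i a * Pi.single i m =
                Pi.single i (m * a - a * m) := by
              funext j
              rcases eq_or_ne j i with rfl | hj
              · simp
              · simp [Pi.single_eq_of_ne hj]
            rwa [heq] at this
          obtain ⟨x, hxL, a₀, ha₀⟩ := hPi
          have hxK : ∀ a, x i * a - a * x i ∈ K := by
            intro a
            rw [hmemK]
            have := hLie _ hxL (Pi.single i a)
            have heq : x * Pi.single i a - Pi.single i a * x =
                Pi.single i (x i * a - a * x i) := by
              funext j
              rcases eq_or_ne j i with rfl | hj
              · simp
              · simp [Pi.single_eq_of_ne hj]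
            rwa [heq] at this
          exact (hmemK _).mp (LieIdealAux.core K hKL (x i) hxK ⟨a₀, ha₀⟩ (v i) htr)
        · have hvi := hv' i
          rw [if_neg (by simpa using hPi)] at hvi
          rw [Submodule.mem_bot] at hvi
          rw [hvi, Pi.single_zero]
          exact L.zero_mem
      have : v = ∑ i : Fin k, Pi.single i (v i) := (Finset.univ_sum_single v).symm
      rw [this]
      exact L.sum_mem fun i _ => hsingle i
    · -- upper bound
      intro x hx
      rw [Submodule.mem_sup]
      refine ⟨fun i => if P i then x i else 0, ?_, fun i => if P i then 0 else x i, ?_, ?_⟩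
      · rw [Submodule.mem_pi]
        intro i _
        by_cases hPi : P i
        · rw [if_pos (by simpa using hPi)]; trivial
        · rw [if_neg (by simpa using hPi)]
          simp [hPi]
      · rw [Submodule.mem_pi]
        intro i _
        by_cases hPi : P i
        · simp only [if_pos hPi]
          exact Submodule.zero_mem _
        · simp only [if_neg hPi]
          -- x i commutes with everything
          have hcomm : ∀ a, x i * a = a * x i := by
            intro a; by_contra h; exact hPi ⟨x, hx, a, h⟩
          obtain ⟨r, hr⟩ := Matrix.mem_range_scalar_of_commute_single
            (M := x i) (fun p q _ => (hcomm _).symm)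
          rw [Submodule.mem_span_singleton]
          refine ⟨r, ?_⟩
          rw [← hr]
          ext p q
          by_cases h : p = q <;>
            simp [Matrix.scalar_apply, Matrix.one_apply, Matrix.diagonal_apply, h]
      · funext i
        by_cases hPi : P i <;> simp [hPi]
  · -- converse
    rintro ⟨δ, hlow, hup⟩ x hxL a
    apply hlow
    rw [Submodule.mem_pi]
    intro i _
    by_cases hδ : δ i = true
    · rw [if_pos hδ]
      show ((x * a - a * x) i).trace = 0
      show (x i * a i - a i * x i).trace = 0
      rw [Matrix.trace_sub, Matrix.trace_mul_comm, sub_self]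
    · rw [if_neg hδ]
      rw [Submodule.mem_bot]
      obtain ⟨y, hy, z, hz, hyz⟩ := Submodule.mem_sup.mp (hup hxL)
      have hyi : y i = 0 := by
        have := Submodule.mem_pi.mp hy i (Set.mem_univ i)
        rwa [if_neg hδ, Submodule.mem_bot] at this
      have hzi : ∃ c : ℂ, x i = c • 1 := by
        have := Submodule.mem_pi.mp hz i (Set.mem_univ i)
        rw [Submodule.mem_span_singleton] at this
        obtain ⟨c, hc⟩ := this
        refine ⟨c, ?_⟩
        rw [← hyz]
        show y i + z i = c • 1
        rw [hyi, zero_add, hc]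
      obtain ⟨c, hc⟩ := hzi
      show x i * a i - a i * x i = 0
      rw [hc, smul_mul_assoc, one_mul, mul_smul_comm, mul_one, sub_self]
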